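/- arXiv:1904.12398 — 3 statements merged into one kernel-verified Lean document; each statement's English description precedes it below -/
import Mathlib

section
/- Let Θ ⊆ ℝ^p be open and convex, let I be a p×p real symmetric positive definite matrix with smallest eigenvalue λ > 0, and let M > 0, η ≥ 0, δ > 0 satisfy η/2 + Mδ/6 ≤ λ/4. Let n ≥ 1, let G_n : Θ → ℝ be three times continuously differentiable with sup_{γ∈Θ} ‖∂³G_n(γ)‖ ≤ M·n, and let γ̂_n ∈ Θ satisfy ∂G_n(γ̂_n) = 0 and ‖(1/n)·∂²G_n(γ̂_n) + I‖ ≤ η (operator norm). Then for every t ∈ ℝ^p with |t| ≤ δ√n and γ̂_n + t/√n ∈ Θ, one has G_n(γ̂_n + t/√n) − G_n(γ̂_n) ≤ −(1/4)·tᵀ I t. -/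
open MeasureTheory Filter Topology

/-- The quadratic form `s ↦ sᵀ I t` associated with a matrix `I`. -/
noncomputable def quadForm {p : ℕ} (I : Matrix (Fin p) (Fin p) ℝ)
    (s t : EuclideanSpace ℝ (Fin p)) : ℝ := ∑ i, ∑ j, s i * I i j * t j

lemma quadForm_smul_smul {p : ℕ} (I : Matrix (Fin p) (Fin p) ℝ) (c : ℝ)
    (t : EuclideanSpace ℝ (Fin p)) :
    quadForm I (c • t) (c • t) = c ^ 2 * quadForm I t t := by
  unfold quadForm
  rw [Finset.mul_sum]
  refine Finset.sum_congr rfl fun i _ => ?_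
  rw [Finset.mul_sum]
  refine Finset.sum_congr rfl fun j _ => ?_
  have h1 : (c • t) i = c * t i := rfl
  have h2 : (c • t) j = c * t j := rfl
  rw [h1, h2]; ring

set_option maxHeartbeats 1000000 in
/-- domination bound on the central integration region
`D₁ₙ = {t : |t| ≤ δ√n}` in the Laplace-type expansion. -/
theorem central_region_domination {p : ℕ} (Θ : Set (EuclideanSpace ℝ (Fin p)))
    (hΘo : IsOpen Θ) (hΘc : Convex ℝ Θ)
    (I : Matrix (Fin p) (Fin p) ℝ) (hsymm : I.IsSymm) (hpd : I.PosDef)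
    (lam : ℝ) (hlam : 0 < lam)
    (hlam' : ∀ v : EuclideanSpace ℝ (Fin p), lam * ‖v‖ ^ 2 ≤ quadForm I v v)
    (M : ℝ) (hM : 0 < M) (η : ℝ) (hη : 0 ≤ η) (δ : ℝ) (hδ : 0 < δ)
    (hcond : η / 2 + M * δ / 6 ≤ lam / 4)
    (n : ℕ) (hn : 1 ≤ n)
    (Gn : EuclideanSpace ℝ (Fin p) → ℝ) (hGn : ContDiffOn ℝ 3 Gn Θ)
    (hG3 : ∀ γ ∈ Θ, ‖iteratedFDerivWithin ℝ 3 Gn Θ γ‖ ≤ M * n)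
    (γh : EuclideanSpace ℝ (Fin p)) (hγh : γh ∈ Θ)
    (hcrit : fderivWithin ℝ Gn Θ γh = 0)
    (B : ContinuousMultilinearMap ℝ (fun _ : Fin 2 => EuclideanSpace ℝ (Fin p)) ℝ)
    (hB : ∀ s t, B ![s, t] = quadForm I s t)
    (hhess : ‖(n : ℝ)⁻¹ • iteratedFDerivWithin ℝ 2 Gn Θ γh + B‖ ≤ η) :
    ∀ t : EuclideanSpace ℝ (Fin p), ‖t‖ ≤ δ * Real.sqrt n →
      γh + (Real.sqrt n)⁻¹ • t ∈ Θ →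
      Gn (γh + (Real.sqrt n)⁻¹ • t) - Gn γh ≤ -(1 / 4) * quadForm I t t := by
  intro t ht hmem
  have hnpos : (0:ℝ) < n := by exact_mod_cast hn
  have hsq : (0:ℝ) < Real.sqrt n := Real.sqrt_pos.2 hnpos
  set c : ℝ := (Real.sqrt n)⁻¹ with hc
  have hcpos : 0 < c := inv_pos.2 hsq
  set h : EuclideanSpace ℝ (Fin p) := c • t with hh
  have hud : UniqueDiffOn ℝ Θ := hΘo.uniqueDiffOn
  -- segment membership
  have hseg : ∀ u ∈ Set.Icc (0:ℝ) 1, γh + u • h ∈ Θ := by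
    intro u hu
    have := hΘc hγh hmem (by linarith [hu.2] : (0:ℝ) ≤ 1 - u) hu.1 (by ring)
    convert this using 1
    simp [smul_add, sub_smul, one_smul]
    abel
  -- derivative data
  set f1 := fderivWithin ℝ Gn Θ with hf1
  set f2 := fderivWithin ℝ f1 Θ with hf2
  set F2 := iteratedFDerivWithin ℝ 2 Gn Θ with hF2
  have hGdiff : DifferentiableOn ℝ Gn Θ := hGn.differentiableOn (by norm_num)
  have hf1cd : ContDiffOn ℝ 2 f1 Θ := hGn.fderivWithin hud (by norm_num)
  have hf1diff : DifferentiableOn ℝ f1 Θ := hf1cd.differentiableOn (by norm_num)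
  have hGF : ∀ x ∈ Θ, HasFDerivAt Gn (f1 x) x := by
    intro x hx
    have hd := (hGdiff x hx).differentiableAt (hΘo.mem_nhds hx)
    have he : f1 x = fderiv ℝ Gn x := fderivWithin_of_isOpen hΘo hx
    rw [he]; exact hd.hasFDerivAt
  have hf1F : ∀ x ∈ Θ, HasFDerivAt f1 (f2 x) x := by
    intro x hx
    have hd := (hf1diff x hx).differentiableAt (hΘo.mem_nhds hx)
    have he : f2 x = fderiv ℝ f1 x := fderivWithin_of_isOpen hΘo hx
    rw [he]; exact hd.hasFDerivAt
  have hF2diff : DifferentiableOn ℝ F2 Θ :=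
    hGn.differentiableOn_iteratedFDerivWithin (by norm_num) hud
  have hF2f2 : ∀ x ∈ Θ, ∀ a b : EuclideanSpace ℝ (Fin p), F2 x ![a, b] = f2 x a b := by
    intro x hx a b
    have := iteratedFDerivWithin_two_apply Gn hud hx ![a, b]
    simpa using this
  -- Lipschitz bound on the second derivative
  have hF2lip : ∀ x ∈ Θ, ‖F2 x - F2 γh‖ ≤ M * n * ‖x - γh‖ := by
    intro x hx
    refine hΘc.norm_image_sub_le_of_norm_fderivWithin_le hF2diff ?_ hγh hx
    intro y hy
    rw [hF2, norm_fderivWithin_iteratedFDerivWithin]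
    exact hG3 y hy
  set a : ℝ := f2 γh h h with ha
  set c3 : ℝ := M * n * ‖h‖ ^ 3 with hc3
  have hbound : ∀ u ∈ Set.Icc (0:ℝ) 1, f2 (γh + u • h) h h ≤ a + c3 * u := by
    intro u hu
    have hx := hseg u hu
    have l1 : ‖F2 (γh + u • h) - F2 γh‖ ≤ M * n * (u * ‖h‖) := by
      have := hF2lip _ hx
      simpa [norm_smul, abs_of_nonneg hu.1] using this
    have l2 : |f2 (γh + u • h) h h - a| ≤ ‖F2 (γh + u • h) - F2 γh‖ * (‖h‖ * ‖h‖) := by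
      have e : f2 (γh + u • h) h h - a = (F2 (γh + u • h) - F2 γh) ![h, h] := by
        rw [ContinuousMultilinearMap.sub_apply, hF2f2 _ hx, hF2f2 _ hγh]
      rw [e]
      have := (F2 (γh + u • h) - F2 γh).le_opNorm ![h, h]
      simpa [Fin.prod_univ_two, Real.norm_eq_abs, mul_assoc] using this
    have hhn : 0 ≤ ‖h‖ := norm_nonneg _
    have l3 := (abs_le.1 l2).2
    have l4 : ‖F2 (γh + u • h) - F2 γh‖ * (‖h‖ * ‖h‖) ≤ M * n * (u * ‖h‖) * (‖h‖ * ‖h‖) :=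
      mul_le_mul_of_nonneg_right l1 (mul_nonneg hhn hhn)
    have l5 : M * n * (u * ‖h‖) * (‖h‖ * ‖h‖) = c3 * u := by rw [hc3]; ring
    linarith
  -- the auxiliary function ψ and its derivative
  set φ : ℝ → ℝ := fun u => Gn (γh + u • h) with hφdef
  set q : ℝ → ℝ := fun u => f1 (γh + u • h) h with hqdef
  have hg : ∀ u : ℝ, HasDerivAt (fun u : ℝ => γh + u • h) h u := by
    intro u
    simpa using ((hasDerivAt_id u).smul_const h).const_add γh
  have hφ : ∀ u ∈ Set.Icc (0:ℝ) 1, HasDerivAt φ (q u) u := by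
    intro u hu
    exact (hGF _ (hseg u hu)).comp_hasDerivAt u (hg u)
  have hq : ∀ u ∈ Set.Icc (0:ℝ) 1, HasDerivAt q (f2 (γh + u • h) h h) u := by
    intro u hu
    have h1 : HasDerivAt (fun y : ℝ => f1 (γh + y • h)) (f2 (γh + u • h) h) u :=
      (hf1F _ (hseg u hu)).comp_hasDerivAt u (hg u)
    have := h1.clm_apply (hasDerivAt_const u h)
    simpa using this
  set ψ : ℝ → ℝ := fun u =>
    φ u + (1 - u) * q u - (a * (u - u ^ 2 / 2) + c3 * (u ^ 2 / 2 - u ^ 3 / 3)) with hψdef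
  have hψ : ∀ u ∈ Set.Icc (0:ℝ) 1,
      HasDerivAt ψ ((1 - u) * (f2 (γh + u • h) h h - a - c3 * u)) u := by
    intro u hu
    have h1 : HasDerivAt (fun y : ℝ => (1 - y) * q y)
        ((-1) * q u + (1 - u) * f2 (γh + u • h) h h) u := by
      exact ((hasDerivAt_id u).const_sub 1).mul (hq u hu)
    have h2 : HasDerivAt (fun y : ℝ => a * (y - y ^ 2 / 2) + c3 * (y ^ 2 / 2 - y ^ 3 / 3))
        (a * (1 - u) + c3 * (u - u ^ 2)) u := by
      have p1 : HasDerivAt (fun y : ℝ => y - y ^ 2 / 2) (1 - u) u := by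
        simpa using (hasDerivAt_id' u).fun_sub ((hasDerivAt_pow 2 u).div_const 2)
      have p2 : HasDerivAt (fun y : ℝ => y ^ 2 / 2 - y ^ 3 / 3) (u - u ^ 2) u := by
        have := ((hasDerivAt_pow 2 u).div_const 2).fun_sub ((hasDerivAt_pow 3 u).div_const 3)
        refine this.congr_deriv ?_
        norm_num
      exact (p1.const_mul a).add (p2.const_mul c3)
    have := ((hφ u hu).fun_add h1).fun_sub h2
    refine this.congr_deriv ?_
    ring
  have hanti : AntitoneOn ψ (Set.Icc (0:ℝ) 1) := by
    refine antitoneOn_of_deriv_nonpos (convex_Icc 0 1) ?_ ?_ ?_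
    · intro u hu
      exact (hψ u hu).continuousAt.continuousWithinAt
    · intro u hu
      rw [interior_Icc] at hu
      exact ((hψ u (Set.mem_Icc_of_Ioo hu)).differentiableAt).differentiableWithinAt
    · intro u hu
      rw [interior_Icc] at hu
      rw [(hψ u (Set.mem_Icc_of_Ioo hu)).deriv]
      have hb := hbound u (Set.mem_Icc_of_Ioo hu)
      have : (0:ℝ) ≤ 1 - u := by linarith [hu.2]
      nlinarith
  have key : Gn (γh + h) - Gn γh ≤ a / 2 + c3 / 6 := by
    have h01 := hanti (Set.left_mem_Icc.2 (by norm_num)) (Set.right_mem_Icc.2 (by norm_num))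
      (by norm_num)
    have hψ0 : ψ 0 = Gn γh := by
      have hq0 : q 0 = 0 := by
        simp only [hqdef, zero_smul, add_zero, ← hf1, hcrit]
        rfl
      simp [hψdef, hφdef, hq0]
    have hψ1 : ψ 1 = Gn (γh + h) - (a / 2 + c3 / 6) := by
      simp [hψdef, hφdef]
      ring
    rw [hψ0, hψ1] at h01
    linarith
  -- bound a using the Hessian hypothesis
  have hDa : F2 γh ![h, h] = a := hF2f2 _ hγh h h
  have habs : |(n:ℝ)⁻¹ * a + quadForm I h h| ≤ η * (‖h‖ * ‖h‖) := by
    have l1 := ((n:ℝ)⁻¹ • iteratedFDerivWithin ℝ 2 Gn Θ γh + B).le_opNorm ![h, h]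
    have l2 : ((n:ℝ)⁻¹ • iteratedFDerivWithin ℝ 2 Gn Θ γh + B) ![h, h]
        = (n:ℝ)⁻¹ * a + quadForm I h h := by
      rw [ContinuousMultilinearMap.add_apply, ContinuousMultilinearMap.smul_apply,
        smul_eq_mul, hB, ← hF2, hDa]
    rw [l2] at l1
    have hprod : (0:ℝ) ≤ ∏ i : Fin 2, ‖(![h, h] : Fin 2 → EuclideanSpace ℝ (Fin p)) i‖ :=
      Finset.prod_nonneg fun _ _ => norm_nonneg _
    have l3 : ‖(n:ℝ)⁻¹ • iteratedFDerivWithin ℝ 2 Gn Θ γh + B‖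
          * ∏ i, ‖(![h, h] : Fin 2 → EuclideanSpace ℝ (Fin p)) i‖
        ≤ η * (‖h‖ * ‖h‖) := by
      calc _ ≤ η * ∏ i, ‖(![h, h] : Fin 2 → EuclideanSpace ℝ (Fin p)) i‖ :=
            mul_le_mul_of_nonneg_right hhess hprod
        _ = η * (‖h‖ * ‖h‖) := by simp [Fin.prod_univ_two]
    have := l1.trans l3
    simpa [Real.norm_eq_abs] using this
  have hA : a ≤ n * (η * (‖h‖ * ‖h‖)) - n * quadForm I h h := by
    have h1 := (abs_le.1 habs).2
    have hnne : (n:ℝ) ≠ 0 := ne_of_gt hnpos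
    have h2 : (n:ℝ) * ((n:ℝ)⁻¹ * a + quadForm I h h) ≤ (n:ℝ) * (η * (‖h‖ * ‖h‖)) :=
      mul_le_mul_of_nonneg_left h1 (le_of_lt hnpos)
    rw [mul_add, ← mul_assoc, mul_inv_cancel₀ hnne, one_mul] at h2
    linarith
  -- scaling identities
  have hc2 : c ^ 2 = (n:ℝ)⁻¹ := by
    rw [hc, ← Real.sqrt_inv]
    exact Real.sq_sqrt (by positivity)
  have hnc2 : (n:ℝ) * c ^ 2 = 1 := by
    rw [hc2]; field_simp
  have hnormh : ‖h‖ = c * ‖t‖ := by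
    rw [hh, norm_smul, Real.norm_eq_abs, abs_of_nonneg (le_of_lt hcpos)]
  have hQh : quadForm I h h = c ^ 2 * quadForm I t t := quadForm_smul_smul I c t
  have hct : c * ‖t‖ ≤ δ := by
    rw [hc, inv_mul_le_iff₀ hsq, mul_comm]
    exact ht
  set Q : ℝ := quadForm I t t with hQ
  have hAfinal : a ≤ η * ‖t‖ ^ 2 - Q := by
    have e1 : (n:ℝ) * (η * (‖h‖ * ‖h‖)) = η * ‖t‖ ^ 2 := by
      rw [hnormh]
      linear_combination η * ‖t‖ ^ 2 * hnc2
    have e2 : (n:ℝ) * quadForm I h h = Q := by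
      rw [hQh, ← mul_assoc, hnc2, one_mul]
    rw [e1, e2] at hA
    exact hA
  have hc3final : c3 ≤ M * δ * ‖t‖ ^ 2 := by
    rw [hc3, hnormh]
    have e : (n:ℝ) * (c * ‖t‖) ^ 3 = (c * ‖t‖) * ‖t‖ ^ 2 := by
      linear_combination c * ‖t‖ ^ 3 * hnc2
    rw [mul_assoc, e, mul_assoc M δ]
    have htn : (0:ℝ) ≤ ‖t‖ ^ 2 := sq_nonneg _
    exact mul_le_mul_of_nonneg_left (mul_le_mul_of_nonneg_right hct htn) hM.le
  have hlamQ : lam * ‖t‖ ^ 2 ≤ Q := hlam' t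
  have hcd : (η / 2 + M * δ / 6) * ‖t‖ ^ 2 ≤ lam / 4 * ‖t‖ ^ 2 :=
    mul_le_mul_of_nonneg_right hcond (sq_nonneg _)
  calc Gn (γh + c • t) - Gn γh = Gn (γh + h) - Gn γh := by rw [hh]
    _ ≤ a / 2 + c3 / 6 := key
    _ ≤ (η * ‖t‖ ^ 2 - Q) / 2 + M * δ * ‖t‖ ^ 2 / 6 := by linarith
    _ ≤ -(1 / 4) * Q := by nlinarith
end

section
/- Let Θ ⊆ ℝ^p be open and convex, let I be a p×p real symmetric positive definite matrix, let γ⋆ ∈ Θ, let M > 0, and let π : ℝ^p → [0,∞) be continuous at γ⋆. For each n ≥ 1, let G_n : Θ → ℝ be three times continuously differentiable with sup_{γ∈Θ} ‖∂³G_n(γ)‖ ≤ M·n, and let γ̂_n ∈ Θ satisfy ∂G_n(γ̂_n) = 0. Assume γ̂_n → γ⋆ and (1/n)·∂²G_n(γ̂_n) → −I as n → ∞. Then for every fixed t ∈ ℝ^p, one has γ̂_n + t/√n ∈ Θ for all sufficiently large n, and exp(G_n(γ̂_n + t/√n) − G_n(γ̂_n)) · π(γ̂_n + t/√n) → exp(−(1/2)·tᵀ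 I t) · π(γ⋆) as n → ∞. -/
open MeasureTheory Filter Topology

/-- Second-order Taylor bound with third-derivative control. -/
lemma taylor2_bound {E : Type*} [NormedAddCommGroup E] [NormedSpace ℝ E]
    {Θ : Set E} (hΘo : IsOpen Θ) (hΘc : Convex ℝ Θ)
    {f : E → ℝ} (hf : ContDiffOn ℝ 3 f Θ)
    {K : ℝ} (hK : ∀ γ ∈ Θ, ‖iteratedFDerivWithin ℝ 3 f Θ γ‖ ≤ K)
    {a : E} (ha : a ∈ Θ) (hcrit : fderiv ℝ f a = 0)
    {h : E} (hah : a + h ∈ Θ) :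
    |f (a + h) - f a - (1/2) * iteratedFDeriv ℝ 2 f a ![h, h]| ≤ K * ‖h‖ ^ 3 := by
  set F := fderiv ℝ f with hF
  set G := fderiv ℝ F with hG
  have hK0 : 0 ≤ K := le_trans (norm_nonneg _) (hK a ha)
  have hseg : segment ℝ a (a + h) ⊆ Θ := hΘc.segment_subset ha hah
  have hF2 : ContDiffOn ℝ 2 F Θ := hf.fderiv_of_isOpen hΘo (by norm_num)
  have hG1 : ContDiffOn ℝ 1 G Θ := hF2.fderiv_of_isOpen hΘo (by norm_num)
  have hfdiff : ∀ x ∈ Θ, DifferentiableAt ℝ f x := fun x hx =>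
    (hf.differentiableOn (by norm_num)).differentiableAt (hΘo.mem_nhds hx)
  have hFdiff : ∀ x ∈ Θ, DifferentiableAt ℝ F x := fun x hx =>
    (hF2.differentiableOn (by norm_num)).differentiableAt (hΘo.mem_nhds hx)
  have hGdiff : ∀ x ∈ Θ, DifferentiableAt ℝ G x := fun x hx =>
    (hG1.differentiableOn (by norm_num)).differentiableAt (hΘo.mem_nhds hx)
  -- third derivative bound
  letI i1 : SeminormedAddCommGroup (E →L[ℝ] ℝ) := inferInstance
  letI i2 : NormedSpace ℝ (E →L[ℝ] ℝ) := inferInstance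
  letI i3 : SeminormedAddCommGroup (E →L[ℝ] E →L[ℝ] ℝ) := inferInstance
  letI i4 : NormedSpace ℝ (E →L[ℝ] E →L[ℝ] ℝ) := inferInstance
  have hbound : ∀ x ∈ Θ, ‖fderiv ℝ G x‖ ≤ K := by
    intro x hx
    have h1 : ‖fderiv ℝ G x‖ ≤ ‖iteratedFDeriv ℝ 1 G x‖ := by
      refine ContinuousLinearMap.opNorm_le_bound _ (norm_nonneg _) fun u => ?_
      have h2 := (iteratedFDeriv ℝ 1 G x).le_opNorm ![u]
      simpa [iteratedFDeriv_one_apply] using h2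
    refine h1.trans ?_
    rw [hG, norm_iteratedFDeriv_fderiv, hF, norm_iteratedFDeriv_fderiv,
      ← iteratedFDerivWithin_of_isOpen 3 hΘo hx]
    exact hK x hx
  -- Step A : Lipschitz bound on G over the segment
  have hsub : ∀ x ∈ segment ℝ a (a + h), ‖x - a‖ ≤ ‖h‖ := by
    intro x hx
    rw [segment_eq_image'] at hx
    obtain ⟨θ, hθ, rfl⟩ := hx
    rw [add_sub_cancel_left] at *
    rw [add_sub_cancel_left, norm_smul]
    calc ‖θ‖ * ‖h‖ ≤ 1 * ‖h‖ := by
          apply mul_le_mul_of_nonneg_right _ (norm_nonneg _)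
          rw [Real.norm_eq_abs, abs_le]; constructor <;> linarith [hθ.1, hθ.2]
      _ = ‖h‖ := one_mul _
  have hA : ∀ x ∈ segment ℝ a (a + h), ‖G x - G a‖ ≤ K * ‖h‖ := by
    intro x hx
    calc ‖G x - G a‖ ≤ K * ‖x - a‖ :=
          hΘc.norm_image_sub_le_of_norm_fderiv_le (f := G) (C := K) hGdiff hbound ha (hseg hx)
      _ ≤ K * ‖h‖ := mul_le_mul_of_nonneg_left (hsub x hx) hK0
  -- Step B : first-order Taylor bound for F over the segment
  have hBstep : ∀ x ∈ segment ℝ a (a + h),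
      ‖F x - F a - G a (x - a)‖ ≤ K * ‖h‖ * ‖h‖ := by
    intro x hx
    have := (convex_segment a (a + h)).norm_image_sub_le_of_norm_hasFDerivWithin_le'
      (f := F) (f' := G) (φ := G a) (C := K * ‖h‖)
      (fun y hy => ((hFdiff y (hseg hy)).hasFDerivAt).hasFDerivWithinAt)
      (fun y hy => hA y hy) (left_mem_segment ℝ a (a + h)) hx
    calc ‖F x - F a - G a (x - a)‖ ≤ K * ‖h‖ * ‖x - a‖ := this
      _ ≤ K * ‖h‖ * ‖h‖ := by
          apply mul_le_mul_of_nonneg_left (hsub x hx)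
          positivity
  -- Step C : 1D mean value argument
  set Q : ℝ := G a h h with hQ
  set c : ℝ → E := fun s => a + s • h with hc
  have hcseg : ∀ s ∈ Set.Icc (0:ℝ) 1, c s ∈ segment ℝ a (a + h) := by
    intro s hs
    rw [segment_eq_image']
    exact ⟨s, hs, by simp [hc]⟩
  set q : ℝ → ℝ := fun s => f (c s) - s ^ 2 / 2 * Q with hq
  have hderiv : ∀ s ∈ Set.Icc (0:ℝ) 1, HasDerivAt q (F (c s) h - s * Q) s := by
    intro s hs
    have hcs : HasDerivAt c h s := by
      simpa [hc] using ((hasDerivAt_id s).smul_const h).const_add a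
    have h1 : HasDerivAt (fun s => f (c s)) (F (c s) h) s := by
      have hd := hfdiff (c s) (hseg (hcseg s hs))
      exact (hd.hasFDerivAt.comp_hasDerivAt s hcs)
    have h2 : HasDerivAt (fun s : ℝ => s ^ 2 / 2 * Q) (s * Q) s := by
      have := (hasDerivAt_pow 2 s).div_const 2 |>.mul_const Q
      simpa using this.congr_deriv (by ring)
    exact h1.sub h2
  have hbnd : ∀ s ∈ Set.Icc (0:ℝ) 1, ‖F (c s) h - s * Q‖ ≤ K * ‖h‖ ^ 3 := by
    intro s hs
    have hFa : F a = 0 := hcrit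
    have key : F (c s) h - s * Q = (F (c s) - F a - G a (s • h)) h := by
      simp only [ContinuousLinearMap.sub_apply, hFa, ContinuousLinearMap.zero_apply,
        ContinuousLinearMap.map_smul, ContinuousLinearMap.smul_apply, smul_eq_mul, hQ]
      ring
    rw [key]
    calc ‖(F (c s) - F a - G a (s • h)) h‖
        ≤ ‖F (c s) - F a - G a (s • h)‖ * ‖h‖ := ContinuousLinearMap.le_opNorm _ _
      _ ≤ (K * ‖h‖ * ‖h‖) * ‖h‖ := by
          apply mul_le_mul_of_nonneg_right _ (norm_nonneg _)
          have := hBstep (c s) (hcseg s hs)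
          simpa [hc, add_sub_cancel_left] using this
      _ = K * ‖h‖ ^ 3 := by ring
  have hmvt := (convex_Icc (0:ℝ) 1).norm_image_sub_le_of_norm_hasDerivWithin_le
    (f := q) (f' := fun s => F (c s) h - s * Q) (C := K * ‖h‖ ^ 3)
    (fun s hs => (hderiv s hs).hasDerivWithinAt) hbnd
    (Set.left_mem_Icc.2 zero_le_one) (Set.right_mem_Icc.2 zero_le_one)
  have hq10 : q 1 - q 0 = f (a + h) - f a - (1/2) * iteratedFDeriv ℝ 2 f a ![h, h] := by
    have h2 : iteratedFDeriv ℝ 2 f a ![h, h] = Q := by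
      rw [iteratedFDeriv_two_apply]; rfl
    simp only [hq, hc, one_smul, zero_smul, add_zero, h2]
    ring
  rw [← hq10]
  simpa [Real.norm_eq_abs] using hmvt


/-- pointwise convergence of the rescaled integrand on the central
region in the Laplace-type expansion. -/
theorem central_integrand_pointwise_limit {p : ℕ} (Θ : Set (EuclideanSpace ℝ (Fin p)))
    (hΘo : IsOpen Θ) (hΘc : Convex ℝ Θ)
    (I : Matrix (Fin p) (Fin p) ℝ) (hsymm : I.IsSymm) (hpd : I.PosDef)
    (B : ContinuousMultilinearMap ℝ (fun _ : Fin 2 => EuclideanSpace ℝ (Fin p)) ℝ)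
    (hB : ∀ s t, B ![s, t] = quadForm I s t)
    (γs : EuclideanSpace ℝ (Fin p)) (hγs : γs ∈ Θ) (M : ℝ) (hM : 0 < M)
    (pr : EuclideanSpace ℝ (Fin p) → ℝ) (hpr0 : ∀ x, 0 ≤ pr x)
    (hprc : ContinuousAt pr γs)
    (Gn : ℕ → EuclideanSpace ℝ (Fin p) → ℝ)
    (hGn : ∀ n, 1 ≤ n → ContDiffOn ℝ 3 (Gn n) Θ)
    (hG3 : ∀ n, 1 ≤ n → ∀ γ ∈ Θ, ‖iteratedFDerivWithin ℝ 3 (Gn n) Θ γ‖ ≤ M * n)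
    (γh : ℕ → EuclideanSpace ℝ (Fin p)) (hγh : ∀ n, γh n ∈ Θ)
    (hcrit : ∀ n, fderivWithin ℝ (Gn n) Θ (γh n) = 0)
    (hγcons : Tendsto γh atTop (𝓝 γs))
    (hhess : Tendsto (fun n : ℕ => (n : ℝ)⁻¹ • iteratedFDerivWithin ℝ 2 (Gn n) Θ (γh n))
      atTop (𝓝 (-B))) :
    ∀ t : EuclideanSpace ℝ (Fin p),
      (∀ᶠ n in atTop, γh n + (Real.sqrt n)⁻¹ • t ∈ Θ) ∧
      Tendsto (fun n =>
          Real.exp (Gn n (γh n + (Real.sqrt n)⁻¹ • t) - Gn n (γh n)) *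
            pr (γh n + (Real.sqrt n)⁻¹ • t))
        atTop (𝓝 (Real.exp (-(1 / 2) * quadForm I t t) * pr γs)) := by
  intro t
  -- basic limits
  have hsqrt0 : Tendsto (fun n : ℕ => (Real.sqrt n)⁻¹) atTop (𝓝 0) := by
    apply Filter.Tendsto.inv_tendsto_atTop
    have : Tendsto (fun n : ℕ => Real.sqrt n) atTop atTop := by
      simp only [Real.sqrt_eq_rpow]
      exact (tendsto_rpow_atTop (by norm_num)).comp tendsto_natCast_atTop_atTop
    exact this
  have hpt : Tendsto (fun n => γh n + (Real.sqrt n)⁻¹ • t) atTop (𝓝 γs) := by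
    have := hγcons.add (hsqrt0.smul_const t)
    simpa using this
  have hmem : ∀ᶠ n in atTop, γh n + (Real.sqrt n)⁻¹ • t ∈ Θ :=
    hpt.eventually (hΘo.eventually_mem hγs)
  refine ⟨hmem, ?_⟩
  set A : ℕ → ContinuousMultilinearMap ℝ (fun _ : Fin 2 => EuclideanSpace ℝ (Fin p)) ℝ :=
    fun n => iteratedFDerivWithin ℝ 2 (Gn n) Θ (γh n) with hA
  -- evaluation convergence
  have hq : Tendsto (fun n : ℕ => ((n:ℝ)⁻¹ • A n) ![t, t]) atTop (𝓝 ((-B) ![t, t])) :=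
    ((ContinuousMultilinearMap.apply ℝ _ ℝ ![t, t]).continuous.tendsto (-B)).comp hhess
  have hBtt : (-B) ![t, t] = -quadForm I t t := by
    rw [ContinuousMultilinearMap.neg_apply, hB]
  -- remainder goes to zero
  have hrem : Tendsto (fun n : ℕ => Gn n (γh n + (Real.sqrt n)⁻¹ • t) - Gn n (γh n)
      - (1/2) * (((n:ℝ)⁻¹ • A n) ![t, t])) atTop (𝓝 0) := by
    apply squeeze_zero_norm'
      (a := fun n : ℕ => M * ‖t‖ ^ 3 * (Real.sqrt n)⁻¹)
    · filter_upwards [hmem, eventually_ge_atTop 1] with n hnmem hn1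
      have hn0 : (0:ℝ) < n := by exact_mod_cast hn1
      have hs0 : (0:ℝ) < Real.sqrt n := Real.sqrt_pos.2 hn0
      have hsq : Real.sqrt n * Real.sqrt n = (n:ℝ) := Real.mul_self_sqrt hn0.le
      set h : EuclideanSpace ℝ (Fin p) := (Real.sqrt n)⁻¹ • t with hh
      have htay := taylor2_bound hΘo hΘc (hGn n hn1) (hG3 n hn1) (hγh n)
        (by rw [← fderivWithin_of_isOpen hΘo (hγh n)]; exact hcrit n) hnmem
      -- rewrite the second derivative term
      have hiter : iteratedFDeriv ℝ 2 (Gn n) (γh n) ![h, h] = ((n:ℝ)⁻¹ • A n) ![t, t] := by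
        rw [← iteratedFDerivWithin_of_isOpen 2 hΘo (hγh n)]
        have h1 : ![h, h] = fun i => (Real.sqrt n)⁻¹ • (![t, t] i) := by
          funext i; fin_cases i <;> simp [hh]
        rw [h1, (A n).map_smul_univ]
        rw [ContinuousMultilinearMap.smul_apply]
        congr 1
        simp only [Finset.prod_const, Finset.card_univ, Fintype.card_fin]
        rw [inv_pow, sq, hsq]
      rw [hiter] at htay
      have hnorm : ‖h‖ = (Real.sqrt n)⁻¹ * ‖t‖ := by
        rw [hh, norm_smul, Real.norm_eq_abs, abs_of_pos (by positivity)]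
      rw [hnorm] at htay
      have hinv2 : ((Real.sqrt n)⁻¹) ^ 2 = (n:ℝ)⁻¹ := by rw [inv_pow, sq, hsq]
      have hkey : (n:ℝ) * ((Real.sqrt n)⁻¹) ^ 3 = (Real.sqrt n)⁻¹ := by
        have h3 : ((Real.sqrt n)⁻¹) ^ 3 = ((Real.sqrt n)⁻¹) ^ 2 * (Real.sqrt n)⁻¹ := by ring
        rw [h3, hinv2]
        field_simp
      have heq : M * (n:ℝ) * ((Real.sqrt n)⁻¹ * ‖t‖) ^ 3 = M * ‖t‖ ^ 3 * (Real.sqrt n)⁻¹ := by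
        have expand : M * (n:ℝ) * ((Real.sqrt n)⁻¹ * ‖t‖) ^ 3
            = M * ((n:ℝ) * ((Real.sqrt n)⁻¹) ^ 3) * ‖t‖ ^ 3 := by ring
        rw [expand, hkey]; ring
      rw [heq] at htay
      simpa [Real.norm_eq_abs] using htay
    · have := (hsqrt0.const_mul (M * ‖t‖ ^ 3))
      simpa using this
  -- combine
  have hE : Tendsto (fun n => Gn n (γh n + (Real.sqrt n)⁻¹ • t) - Gn n (γh n))
      atTop (𝓝 (-(1/2) * quadForm I t t)) := by
    have hsum := hrem.add (hq.const_mul (1/2))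
    rw [hBtt] at hsum
    have : (0:ℝ) + 1/2 * (-quadForm I t t) = -(1/2) * quadForm I t t := by ring
    rw [this] at hsum
    refine hsum.congr fun n => ?_
    ring
  exact ((Real.continuous_exp.tendsto _).comp hE).mul (hprc.tendsto.comp hpt)
end

section
/- Let Θ ⊆ ℝ^p be a bounded set, let G : Θ → ℝ, let γ⋆ ∈ Θ and χ > 0 satisfy G(γ) − G(γ⋆) ≤ −χ·|γ − γ⋆|² for all γ ∈ Θ, and suppose G is continuous at γ⋆. For each n, let G_n : Θ → ℝ and γ̂_n ∈ Θ, and set ε_n := sup_{γ∈Θ} |(1/n)G_n(γ) − G(γ)|. Assume ε_n → 0 and γ̂_n → γ⋆. Then for every δ > 0 there exist ε'' > 0 and N ∈ ℕ such that for all n ≥ N and all t ∈ ℝ^p with |t| ≥ δ√n and γ̂_n + t/√n ∈ Θ, one has (1/n)·(G_n(γ̂_n + t/√n) − G_n(γ̂_n)) < −ε''. -/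
open MeasureTheory Filter Topology

/-- exponential gap estimate on the tail region
`D₂ₙ = {t : |t| ≥ δ√n}` coming from the identifiability condition. -/
theorem tail_region_gap {p : ℕ} (Θ : Set (EuclideanSpace ℝ (Fin p)))
    (hΘb : Bornology.IsBounded Θ)
    (G : EuclideanSpace ℝ (Fin p) → ℝ)
    (γs : EuclideanSpace ℝ (Fin p)) (hγs : γs ∈ Θ) (χ : ℝ) (hχ : 0 < χ)
    (hG : ∀ γ ∈ Θ, G γ - G γs ≤ -χ * ‖γ - γs‖ ^ 2)
    (hGcont : ContinuousWithinAt G Θ γs)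
    (Gn : ℕ → EuclideanSpace ℝ (Fin p) → ℝ)
    (γh : ℕ → EuclideanSpace ℝ (Fin p)) (hγh : ∀ n, γh n ∈ Θ)
    (ε : ℕ → ℝ) (hε : ∀ n : ℕ, ∀ γ ∈ Θ, |(n : ℝ)⁻¹ * Gn n γ - G γ| ≤ ε n)
    (hε0 : Tendsto ε atTop (𝓝 0))
    (hγcons : Tendsto γh atTop (𝓝 γs)) :
    ∀ δ > (0 : ℝ), ∃ ε'' > (0 : ℝ), ∃ N : ℕ, ∀ n ≥ N,
      ∀ t : EuclideanSpace ℝ (Fin p), δ * Real.sqrt n ≤ ‖t‖ →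
        γh n + (Real.sqrt n)⁻¹ • t ∈ Θ →
        (n : ℝ)⁻¹ * (Gn n (γh n + (Real.sqrt n)⁻¹ • t) - Gn n (γh n)) < -ε'' := by
  intro δ hδ
  refine ⟨χ * δ ^ 2 / 16, by positivity, ?_⟩
  have hcpos : 0 < χ * δ ^ 2 / 32 := by positivity
  have h1 : ∀ᶠ n in atTop, ε n < χ * δ ^ 2 / 32 :=
    hε0.eventually (gt_mem_nhds hcpos)
  have hγΘ : Tendsto γh atTop (𝓝[Θ] γs) :=
    tendsto_nhdsWithin_iff.mpr ⟨hγcons, Eventually.of_forall hγh⟩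
  have h2 : ∀ᶠ n in atTop, |G (γh n) - G γs| < χ * δ ^ 2 / 32 := by
    have h := (hGcont.tendsto.comp hγΘ).eventually
      (Metric.ball_mem_nhds (G γs) hcpos)
    filter_upwards [h] with n hn
    simpa [Real.dist_eq] using hn
  have h3 : ∀ᶠ n in atTop, ‖γh n - γs‖ < δ / 2 := by
    have h := hγcons.eventually
      (Metric.ball_mem_nhds γs (by positivity : (0:ℝ) < δ / 2))
    filter_upwards [h] with n hn
    simpa [dist_eq_norm] using hn
  obtain ⟨N, hN⟩ := eventually_atTop.mp
    (((h1.and h2).and h3).and (eventually_ge_atTop 1))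
  refine ⟨N, fun n hn t ht hmem => ?_⟩
  obtain ⟨⟨⟨hεn, hGn⟩, hnear⟩, hn1⟩ := hN n hn
  have hnpos : (0:ℝ) < n := by exact_mod_cast hn1
  have hsq : 0 < Real.sqrt n := Real.sqrt_pos.mpr hnpos
  set γ := γh n + (Real.sqrt n)⁻¹ • t with hγdef
  have hdist : δ ≤ ‖γ - γh n‖ := by
    have he : γ - γh n = (Real.sqrt n)⁻¹ • t := by
      rw [hγdef]; exact add_sub_cancel_left _ _
    rw [he, norm_smul, Real.norm_eq_abs, abs_of_pos (by positivity),
      inv_mul_eq_div, le_div_iff₀ hsq]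
    linarith
  have hfar : δ / 2 ≤ ‖γ - γs‖ := by
    have h := norm_sub_norm_le (γ - γh n) (γs - γh n)
    have he : (γ - γh n) - (γs - γh n) = γ - γs := by abel
    rw [he] at h
    have h2 : ‖γs - γh n‖ = ‖γh n - γs‖ := norm_sub_rev _ _
    linarith
  have hsq2 : (δ / 2) ^ 2 ≤ ‖γ - γs‖ ^ 2 :=
    pow_le_pow_left₀ (by positivity) hfar 2
  have hGγ := hG γ hmem
  have hmul : χ * (δ / 2) ^ 2 ≤ χ * ‖γ - γs‖ ^ 2 :=
    mul_le_mul_of_nonneg_left hsq2 hχ.le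
  have hεγ := abs_le.mp (hε n γ hmem)
  have hεγh := abs_le.mp (hε n (γh n) (hγh n))
  have habs := abs_le.mp hGn.le
  rw [mul_sub]
  nlinarith [hεγ.1, hεγ.2, hεγh.1, hεγh.2, habs.1, habs.2]
end
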